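/- Let c, c_l be real numbers (candidate locations), let v be a real number (voter location) with |v - c_l| ≤ |v - c|, and let C1 be a finite set of n1 ≥ 1 voters (real numbers) containing v. Then the sum over x in C1 of |x - c_l| is at most (2·n1 - 1) times the sum over x in C1 of |x - c|. -/

import Mathlib

/-- electing `cl` instead of `c` for a cluster `C1` containing a voter `v`
with `|v - cl| ≤ |v - c|` costs at most `(2·n1 - 1)` times the cost of `c`. -/
theorem stmt0 (c cl v : ℝ) (C1 : Finset ℝ) (hv : v ∈ C1)
    (hvd : |v - cl| ≤ |v - c|) :
    ∑ x ∈ C1, |x - cl| ≤ (2 * (C1.card : ℝ) - 1) * ∑ x ∈ C1, |x - c| := by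
  have hvO : |v - c| ≤ ∑ x ∈ C1, |x - c| :=
    Finset.single_le_sum (f := fun x => |x - c|) (fun x _ => abs_nonneg _) hv
  have hO : (0:ℝ) ≤ ∑ x ∈ C1, |x - c| :=
    Finset.sum_nonneg fun x _ => abs_nonneg _
  have hcard : (C1.erase v).card = C1.card - 1 := Finset.card_erase_of_mem hv
  have hn : 1 ≤ C1.card := Finset.card_pos.mpr ⟨v, hv⟩
  rw [← Finset.add_sum_erase _ _ hv, ← Finset.add_sum_erase _ (fun x => |x - c|) hv]
  have hbound : ∑ x ∈ C1.erase v, |x - cl| ≤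
      ∑ x ∈ C1.erase v, (|x - c| + 2 * |v - c|) := by
    apply Finset.sum_le_sum
    intro x _
    have h1 : |x - cl| ≤ |x - c| + |c - v| + |v - cl| := by
      calc |x - cl| ≤ |x - v| + |v - cl| := abs_sub_le _ _ _
        _ ≤ |x - c| + |c - v| + |v - cl| := by
            have := abs_sub_le x c v; linarith
    have h2 : |c - v| = |v - c| := abs_sub_comm _ _
    linarith
  rw [Finset.sum_add_distrib, Finset.sum_const, nsmul_eq_mul] at hbound
  have hec : ((C1.erase v).card : ℝ) = (C1.card : ℝ) - 1 := by
    rw [hcard]; push_cast [hn]; ring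
  rw [hec] at hbound
  have herase : ∑ x ∈ C1.erase v, |x - c| ≤ ∑ x ∈ C1, |x - c| := by
    rw [← Finset.add_sum_erase _ (fun x => |x - c|) hv]
    have := abs_nonneg (v - c); linarith
  have hn' : (1:ℝ) ≤ (C1.card : ℝ) := by exact_mod_cast hn
  have hS' : (0:ℝ) ≤ ∑ x ∈ C1.erase v, |x - c| :=
    Finset.sum_nonneg fun x _ => abs_nonneg _
  nlinarith [mul_nonneg (by linarith : (0:ℝ) ≤ 2 * (C1.card:ℝ) - 2) hS']
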